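/- Suppose a finite field extension L/K descends to L₀/K₀, i.e., K₀ ⊆ K is a subfield, L₀/K₀ is a field extension, and L ≅ L₀ ⊗_{K₀} K as K-algebras. Then L/K is a simple extension (generated by a single element over K) if and only if L₀/K₀ is a simple extension. -/

import Mathlib

open scoped TensorProduct

universe u

/-- Key descent lemma: over a field `K₀`, if `1 ⊗ x` lies in the base change of a submodule `p`,
then `x ∈ p`. -/
lemma tmul_one_mem_baseChange_iff {K₀ K M : Type u} [Field K₀] [Field K] [Algebra K₀ K]
    [AddCommGroup M] [Module K₀ M] (p : Submodule K₀ M) (x : M)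
    (h : (1 : K) ⊗ₜ[K₀] x ∈ p.baseChange K) : x ∈ p := by
  by_contra hx
  obtain ⟨f, hfx, hfp⟩ := p.exists_dual_map_eq_bot_of_notMem hx inferInstance
  let g : K ⊗[K₀] M →ₗ[K] K :=
    (TensorProduct.AlgebraTensorModule.rid K₀ K K).toLinearMap.comp (LinearMap.baseChange K f)
  have hg : p.baseChange K ≤ LinearMap.ker g := by
    rw [Submodule.baseChange_eq_span, Submodule.span_le]
    rintro - ⟨m, hm, rfl⟩
    have : f m = 0 := by
      have : f m ∈ p.map f := Submodule.mem_map_of_mem hm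
      rwa [hfp, Submodule.mem_bot] at this
    simp [g, LinearMap.mem_ker, LinearMap.baseChange_tmul, this]
  have := hg h
  rw [LinearMap.mem_ker] at this
  simp only [g, LinearMap.comp_apply, LinearMap.baseChange_tmul,
    LinearEquiv.coe_coe, TensorProduct.AlgebraTensorModule.rid_tmul] at this
  rw [Algebra.smul_def, mul_one] at this
  exact hfx ((algebraMap K₀ K).injective (by rwa [map_zero]))

set_option maxHeartbeats 1000000 in
set_option synthInstance.maxHeartbeats 100000 in
theorem statement_5 (K₀ K L₀ L : Type u) [Field K₀] [Field K] [Field L₀] [Field L]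
    [Algebra K₀ K] [Algebra K₀ L₀] [Algebra K L] [FiniteDimensional K L]
    (e : Nonempty ((K ⊗[K₀] L₀) ≃ₐ[K] L)) :
    (∃ α : L, IntermediateField.adjoin K {α} = ⊤) ↔
      (∃ β : L₀, IntermediateField.adjoin K₀ {β} = ⊤) := by
  obtain ⟨e⟩ := e
  have hfd : FiniteDimensional K₀ L₀ := by
    have h1 : Module.rank K (K ⊗[K₀] L₀) = Module.rank K L := e.toLinearEquiv.rank_eq
    rw [Module.rank_baseChange] at h1
    have h2 : Cardinal.lift.{u} (Module.rank K₀ L₀) < Cardinal.aleph0 := by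
      rw [h1]; exact Module.rank_lt_aleph0 K L
    rw [Cardinal.lift_lt_aleph0] at h2
    exact Module.rank_lt_aleph0_iff.mp h2
  constructor
  · -- simple over K implies simple over K₀
    intro ⟨α, hα⟩
    have halg : Algebra.IsAlgebraic K L := Algebra.IsAlgebraic.of_finite K L
    have hfinIF : Finite (IntermediateField K L) :=
      Field.finite_intermediateField_of_exists_primitive_element K L ⟨α, hα⟩
    have hfinSub : Finite (Subalgebra K L) := by
      refine Finite.of_injective
        (fun S : Subalgebra K L => S.toIntermediateField' S.isField_of_algebraic) ?_
      intro S T h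
      have := congrArg IntermediateField.toSubalgebra h
      rwa [toSubalgebra_toIntermediateField', toSubalgebra_toIntermediateField'] at this
    let F : IntermediateField K₀ L₀ → Subalgebra K L := fun M =>
      (e.toAlgHom.comp (Algebra.TensorProduct.map (AlgHom.id K K) M.toSubalgebra.val)).range
    have hmem : ∀ (M : IntermediateField K₀ L₀) (x : L₀),
        e ((1 : K) ⊗ₜ[K₀] x) ∈ F M → x ∈ M := by
      intro M x hx
      rw [AlgHom.mem_range] at hx
      obtain ⟨w, hw⟩ := hx
      have hw' : (Algebra.TensorProduct.map (AlgHom.id K K) M.toSubalgebra.val) w = (1 : K) ⊗ₜ[K₀] x :=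
        e.injective hw
      have hrange : ∀ w : K ⊗[K₀] M, (Algebra.TensorProduct.map (AlgHom.id K K) M.toSubalgebra.val) w
          ∈ (Subalgebra.toSubmodule M.toSubalgebra).baseChange K := by
        intro w
        induction w using TensorProduct.induction_on with
        | zero => simp
        | tmul a m =>
            have hm : (m : L₀) ∈ Subalgebra.toSubmodule M.toSubalgebra := m.2
            have heq : (Algebra.TensorProduct.map (AlgHom.id K K) M.toSubalgebra.val)
                (a ⊗ₜ[K₀] m) = a ⊗ₜ[K₀] (m : L₀) := Algebra.TensorProduct.map_tmul _ _ _ _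
            rw [heq]
            exact Submodule.tmul_mem_baseChange_of_mem a hm
        | add u v hu hv => rw [map_add]; exact Submodule.add_mem _ hu hv
      have h3 := hrange w
      rw [hw'] at h3
      exact tmul_one_mem_baseChange_iff _ x h3
    have hle : ∀ M₁ M₂ : IntermediateField K₀ L₀, F M₁ = F M₂ → M₁ ≤ M₂ := by
      intro M₁ M₂ h x hx
      apply hmem M₂ x
      rw [← h]
      exact ⟨(1 : K) ⊗ₜ[K₀] (⟨x, hx⟩ : M₁), by simp; rfl⟩
    have hFinj : Function.Injective F := fun M₁ M₂ h =>
      le_antisymm (hle M₁ M₂ h) (hle M₂ M₁ h.symm)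
    have : Finite (IntermediateField K₀ L₀) := Finite.of_injective F hFinj
    obtain ⟨β, hβ⟩ := Field.exists_primitive_element_of_finite_intermediateField K₀ L₀ ⊤
    exact ⟨β, hβ⟩
  · -- simple over K₀ implies simple over K
    intro ⟨β, hβ⟩
    have hint : IsIntegral K₀ β := IsIntegral.of_finite K₀ β
    have halg : Algebra.adjoin K₀ {β} = ⊤ := by
      have h := congrArg IntermediateField.toSubalgebra hβ
      rwa [IntermediateField.adjoin_simple_toSubalgebra_of_isAlgebraic hint.isAlgebraic,
        IntermediateField.top_toSubalgebra] at h
    have h2 : Algebra.adjoin K {(1 : K) ⊗ₜ[K₀] β} = ⊤ := by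
      have key : ∀ (a : K) (b : L₀), a ⊗ₜ[K₀] b ∈ Algebra.adjoin K {(1 : K) ⊗ₜ[K₀] β} := by
        intro a b
        have hb : (1 : K) ⊗ₜ[K₀] b ∈ Algebra.adjoin K {(1 : K) ⊗ₜ[K₀] β} := by
          have h1 : (1 : K) ⊗ₜ[K₀] b ∈ (Algebra.adjoin K₀ {β}).map
              (Algebra.TensorProduct.includeRight (R := K₀) (A := K) (B := L₀)) := by
            rw [halg]; exact ⟨b, trivial, rfl⟩
          rw [AlgHom.map_adjoin, Set.image_singleton] at h1
          have hcast : (Algebra.TensorProduct.includeRight (R := K₀) (A := K) (B := L₀)) β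
              = (1 : K) ⊗ₜ[K₀] β := rfl
          rw [hcast] at h1
          have hleK : Algebra.adjoin K₀ {(1 : K) ⊗ₜ[K₀] β} ≤
              (Algebra.adjoin K {(1 : K) ⊗ₜ[K₀] β}).restrictScalars K₀ :=
            Algebra.adjoin_le (fun y hy => Algebra.subset_adjoin hy)
          exact hleK h1
        have heq : a ⊗ₜ[K₀] b = a • ((1 : K) ⊗ₜ[K₀] b) := by
          rw [TensorProduct.smul_tmul', smul_eq_mul, mul_one]
        rw [heq]
        exact Subalgebra.smul_mem _ hb a
      have hall : ∀ z : K ⊗[K₀] L₀, z ∈ Algebra.adjoin K {(1 : K) ⊗ₜ[K₀] β} := by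
        intro z
        induction z using TensorProduct.induction_on with
        | zero => exact Subalgebra.zero_mem _
        | tmul a b => exact key a b
        | add u v hu hv => exact Subalgebra.add_mem _ hu hv
      rw [eq_top_iff]
      exact fun z _ => hall z
    refine ⟨e ((1 : K) ⊗ₜ[K₀] β), ?_⟩
    have h3 : Algebra.adjoin K {e ((1 : K) ⊗ₜ[K₀] β)} = ⊤ := by
      have := congrArg (Subalgebra.map e.toAlgHom) h2
      rwa [AlgHom.map_adjoin, Set.image_singleton, Algebra.map_top,
        (AlgHom.range_eq_top _).mpr e.surjective] at this
    apply IntermediateField.toSubalgebra_injective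
    rw [IntermediateField.top_toSubalgebra, eq_top_iff, ← h3]
    exact IntermediateField.algebra_adjoin_le_adjoin K _
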